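/- arXiv:2605.09082 — 2 statements merged into one kernel-verified Lean document; each statement's English description precedes it below -/
import Mathlib

section
/- Let t be a labeled rooted tree over ℤ satisfying the local degree constraint. If moreover the global degree constraint rootLabel t − leafSum t = 2 − numLeaves t holds, then numNodes t = 1, i.e. t consists of a single node all of whose children are leaves. -/
/-- Labeled rooted trees over a type `α`: a tree is either a leaf carrying a
label (an external input edge), or a node carrying a label (the output edge of
a holomorphic disk component) together with a finite list of subtrees. -/
inductive LTree (α : Type*) : Type _ where
  | leaf : α → LTree α
  | node : α → List (LTree α) → LTree α

namespace LTree

variable {α : Type*}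

/-- The label carried by the root constructor. -/
def rootLabel : LTree α → α
  | leaf a => a
  | node a _ => a

/-- The sum of the labels of all leaf constructors occurring in the tree. -/
def leafSum [AddCommMonoid α] : LTree α → α
  | leaf a => a
  | node _ cs => (cs.attach.map (fun c => leafSum c.1)).sum
decreasing_by
  have := List.sizeOf_lt_of_mem c.2
  simp only [LTree.node.sizeOf_spec]
  omega

/-- The number of node constructors occurring in the tree. -/
def numNodes : LTree α → ℕ
  | leaf _ => 0
  | node _ cs => 1 + (cs.attach.map (fun c => numNodes c.1)).sum
decreasing_by
  have := List.sizeOf_lt_of_mem c.2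
  simp only [LTree.node.sizeOf_spec]
  omega

/-- The number of leaf constructors occurring in the tree. -/
def numLeaves : LTree α → ℕ
  | leaf _ => 1
  | node _ cs => (cs.attach.map (fun c => numLeaves c.1)).sum
decreasing_by
  have := List.sizeOf_lt_of_mem c.2
  simp only [LTree.node.sizeOf_spec]
  omega

/-- The local degree constraint: at every node with label `a` and children
`c₁, …, c_n`, one has `a - (rootLabel c₁ + ⋯ + rootLabel c_n) = 2 - n`.
This is the rigidity (virtual dimension zero) condition for each disk
component of a nodal configuration. -/
def LocalDeg : LTree ℤ → Prop
  | leaf _ => True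
  | node a cs =>
      (a - (cs.map rootLabel).sum = 2 - (cs.length : ℤ)) ∧ ∀ c ∈ cs, LocalDeg c

end LTree

namespace LTree

theorem leafSum_node (a : ℤ) (cs : List (LTree ℤ)) :
    leafSum (node a cs) = (cs.map leafSum).sum := by
  rw [leafSum, List.map_attach_eq_pmap]
  simp

theorem numNodes_node (a : α) (cs : List (LTree α)) :
    numNodes (node a cs) = 1 + (cs.map numNodes).sum := by
  rw [numNodes, List.map_attach_eq_pmap]
  simp

theorem numLeaves_node (a : α) (cs : List (LTree α)) :
    numLeaves (node a cs) = (cs.map numLeaves).sum := by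
  rw [numLeaves, List.map_attach_eq_pmap]
  simp

theorem key : ∀ t : LTree ℤ, t.LocalDeg →
    t.rootLabel - t.leafSum = (t.numNodes : ℤ) + 1 - (t.numLeaves : ℤ)
  | .leaf a, _ => by simp [rootLabel, leafSum, numNodes, numLeaves]
  | .node a cs, h => by
    rw [LocalDeg] at h
    obtain ⟨h1, h2⟩ := h
    have ihall : ∀ c ∈ cs,
        c.rootLabel - c.leafSum = (c.numNodes : ℤ) + 1 - (c.numLeaves : ℤ) :=
      fun c hc => key c (h2 c hc)
    have hsum : (cs.map rootLabel).sum - (cs.map leafSum).sum =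
        ((cs.map numNodes).sum : ℤ) + cs.length - ((cs.map numLeaves).sum : ℤ) := by
      clear h1 h2
      induction cs with
      | nil => simp
      | cons c l ih =>
        have hc := ihall c (List.mem_cons_self (a := c) (l := l))
        have := ih (fun d hd => ihall d (List.mem_cons_of_mem _ hd))
        simp only [List.map_cons, List.sum_cons, List.length_cons]
        push_cast
        push_cast at this
        omega
    rw [rootLabel, leafSum_node, numNodes_node, numLeaves_node]
    push_cast [Nat.cast_list_sum] at hsum ⊢
    omega
decreasing_by
  have := List.sizeOf_lt_of_mem hc
  simp only [LTree.node.sizeOf_spec]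
  omega

theorem numNodes_pos : ∀ t : LTree α, t.numNodes = 0 → ∃ x, t = leaf x
  | .leaf a, _ => ⟨a, rfl⟩
  | .node a cs, h => by rw [numNodes_node] at h; omega

end LTree

/-- Let `t` be a labeled rooted tree over `ℤ` satisfying the local degree
constraint. If moreover the global degree constraint
`rootLabel t − leafSum t = 2 − numLeaves t` holds, then `numNodes t = 1`,
i.e. `t` consists of a single node all of whose children are leaves. -/
theorem single_disk_of_degree_constraints (t : LTree ℤ) (h : t.LocalDeg)
    (hglob : t.rootLabel - t.leafSum = 2 - (t.numLeaves : ℤ)) :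
    t.numNodes = 1 ∧
      ∃ (a : ℤ) (cs : List (LTree ℤ)),
        t = LTree.node a cs ∧ ∀ c ∈ cs, ∃ x : ℤ, c = LTree.leaf x := by
  have hk := LTree.key t h
  have hn : t.numNodes = 1 := by omega
  refine ⟨hn, ?_⟩
  match t with
  | .leaf a => simp [LTree.numNodes] at hn
  | .node a cs =>
    refine ⟨a, cs, rfl, fun c hc => ?_⟩
    rw [LTree.numNodes_node] at hn
    have hz : (cs.map LTree.numNodes).sum = 0 := by omega
    have : LTree.numNodes c = 0 := by
      have := List.sum_eq_zero_iff.mp hz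
      exact this _ (List.mem_map.mpr ⟨c, hc, rfl⟩)
    exact LTree.numNodes_pos c this
end

section
/- Let k be a commutative ring, A an associative unital k-algebra, d : A → A a k-linear map satisfying d(u·v) = d(u)·v + u·d(v) for all u, v ∈ A, and ε : A → k a k-algebra homomorphism. Let a, a′, b, c, α ∈ A and let (β_l)_{l∈L}, (b_l)_{l∈L}, (w_l)_{l∈L}, (c_l)_{l∈L} be families indexed by a finite set L such that d(b) = α·a′ + Σ_{l∈L} β_l·b_l + a·c + Σ_{l∈L} w_l·c_l. Assume d(d(b)) = 0, d(a′) = 0, d(a) = 0, ε(a) = 1, ε(d(α)) = 0, and for every l ∈ L: ε(d(β_l)) = 0, ε(d(b_l)) = 0, ε(d(w_l)) = 0, and ε(d(c_l)) = 0. Then ε(d(c)) = 0. -/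
/-- Let `k` be a commutative ring, `A` an associative unital `k`-algebra,
`d : A → A` a `k`-linear map satisfying the Leibniz rule
`d (u * v) = d u * v + u * d v`, and `ε : A → k` a `k`-algebra homomorphism.
Let `a, a', b, c, α ∈ A` and let `(β_l)`, `(b_l)`, `(w_l)`, `(c_l)` be
families indexed by a finite set `L` such that
`d b = α * a' + Σ_l β_l * b_l + a * c + Σ_l w_l * c_l`.
Assume `d (d b) = 0`, `d a' = 0`, `d a = 0`, `ε a = 1`, `ε (d α) = 0`, and for
every `l ∈ L`: `ε (d (β_l)) = 0`, `ε (d (b_l)) = 0`, `ε (d (w_l)) = 0`, and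
`ε (d (c_l)) = 0`. Then `ε (d c) = 0`.

This is the inductive step in the verification that the recursively defined
map is an augmentation in the proof of the generation theorem. -/
theorem augmentation_inductive_step
    {k A : Type*} [CommRing k] [Ring A] [Algebra k A]
    (d : A →ₗ[k] A)
    (hleib : ∀ u v : A, d (u * v) = d u * v + u * d v)
    (ε : A →ₐ[k] k)
    {L : Type*} [Fintype L]
    (a a' b c α : A) (β bfam w cfam : L → A)
    (hdb : d b = α * a' + (∑ l : L, β l * bfam l) + a * c + ∑ l : L, w l * cfam l)
    (hddb : d (d b) = 0)
    (hda' : d a' = 0) (hda : d a = 0) (hεa : ε a = 1)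
    (hεdα : ε (d α) = 0)
    (hεdβ : ∀ l : L, ε (d (β l)) = 0)
    (hεdb : ∀ l : L, ε (d (bfam l)) = 0)
    (hεdw : ∀ l : L, ε (d (w l)) = 0)
    (hεdc : ∀ l : L, ε (d (cfam l)) = 0) :
    ε (d c) = 0 := by
  have h : ε (d (d b)) = 0 := by rw [hddb]; simp
  rw [hdb] at h
  simp only [map_add, map_sum, hleib, hda, hda', mul_zero, zero_mul, add_zero, zero_add,
    map_mul, Finset.sum_add_distrib] at h
  simp only [hεdα, hεdβ, hεdb, hεdw, hεdc, hεa, zero_mul, mul_zero, one_mul,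
    Finset.sum_const_zero, add_zero, zero_add] at h
  exact h
end
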